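/- Suppose the threshold satisfies C = (1−α)/2. Then x = 1/2 is a fixed point of the wealth-update map f. Moreover, if in addition (1−α)·√(γ² + σ²) > √(2π)·(αγ² + (1−α)σ²) (equivalently f'(1/2) > 1), then f has two further fixed points a and b with a < 1/2 < b, so f has three distinct fixed points. -/

import Mathlib

open Real

open MeasureTheory Set

set_option maxHeartbeats 1600000 in
/-- if `C = (1-α)/2` then `1/2` is a fixed point of the wealth-update map `f`;
if moreover `(1-α)√(γ²+σ²) > √(2π)(αγ²+(1-α)σ²)` (i.e. `f'(1/2) > 1`), then `f` has two
further fixed points `a < 1/2 < b`, hence three distinct fixed points. -/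
theorem half_fixed_point_and_three_fixed_points
    (γ σ C α : ℝ) (hγ : 0 < γ) (hσ : 0 < σ) (hα : α ∈ Set.Ico (0 : ℝ) 1)
    (Φ : ℝ → ℝ)
    (hΦ : ∀ u, Φ u = ∫ t in Set.Iic u, (Real.sqrt (2 * π))⁻¹ * Real.exp (-t ^ 2 / 2))
    (K : ℝ) (hK : K = Real.sqrt (γ ^ 2 + σ ^ 2) / (α * γ ^ 2 + (1 - α) * σ ^ 2))
    (f : ℝ → ℝ) (hf : f = fun x => 1 - Φ (K * (C - (1 - α) * x)))
    (hC : C = (1 - α) / 2) :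
    f (1 / 2) = 1 / 2
    ∧ ((1 - α) * Real.sqrt (γ ^ 2 + σ ^ 2)
          > Real.sqrt (2 * π) * (α * γ ^ 2 + (1 - α) * σ ^ 2) →
        ∃ a b : ℝ, f a = a ∧ f b = b ∧ a < 1 / 2 ∧ (1 : ℝ) / 2 < b) := by
  set g : ℝ → ℝ := fun t => (Real.sqrt (2 * π))⁻¹ * Real.exp (-t ^ 2 / 2) with hg
  clear_value g
  have hsqrt_pos : 0 < Real.sqrt (2 * π) := Real.sqrt_pos.mpr (by positivity)
  have hg_eq : g = fun t => (Real.sqrt (2 * π))⁻¹ * Real.exp (-(1/2 : ℝ) * t ^ 2) := by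
    funext t; simp only [hg]; congr 1; ring
  have hgint : Integrable g := by
    rw [hg_eq]
    exact (integrable_exp_neg_mul_sq (by norm_num : (0:ℝ) < 1/2)).const_mul _
  have hgcont : Continuous g := by
    rw [hg]
    exact continuous_const.mul (Continuous.rexp (by continuity))
  have hgpos : ∀ t, 0 < g t := fun t => by
    simp only [hg]; positivity
  have htot : ∫ t, g t = 1 := by
    rw [hg_eq, integral_const_mul, integral_gaussian]
    rw [show π / (1/2 : ℝ) = 2 * π by ring]
    exact inv_mul_cancel₀ (ne_of_gt hsqrt_pos)
  -- Φ u is the Iic integral of g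
  have hΦg : ∀ u, Φ u = ∫ t in Iic u, g t := hΦ
  have hΦhalf : Φ 0 = 1 / 2 := by
    have h1 : ∫ t in Ici (0:ℝ), g t = ∫ t in Iic (0:ℝ), g t := by
      have h := integral_comp_neg_Iic (0:ℝ) g
      simp only [neg_zero] at h
      rw [integral_Ici_eq_integral_Ioi, ← h]
      congr 1; funext t; simp [hg, neg_sq]
    have h2 : (∫ t in Iic (0:ℝ), g t) + ∫ t in Ioi (0:ℝ), g t = 1 := by
      rw [intervalIntegral.integral_Iic_add_Ioi hgint.integrableOn hgint.integrableOn, htot]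
    rw [← integral_Ici_eq_integral_Ioi, h1] at h2
    rw [hΦg 0]; linarith
  have hΦlt : ∀ u, Φ u < 1 := by
    intro u
    have h2 : (∫ t in Iic u, g t) + ∫ t in Ioi u, g t = 1 := by
      rw [intervalIntegral.integral_Iic_add_Ioi hgint.integrableOn hgint.integrableOn, htot]
    have h3 : 0 < ∫ t in Ioi u, g t := by
      rw [setIntegral_pos_iff_support_of_nonneg_ae
        (Filter.Eventually.of_forall fun t => (hgpos t).le) hgint.integrableOn]
      have : Function.support g ∩ Ioi u = Ioi u := by
        apply inter_eq_right.mpr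
        intro t _; exact (hgpos t).ne'
      rw [this, Real.volume_Ioi]; simp
    rw [hΦg u]; linarith
  have hΦpos : ∀ u, 0 < Φ u := by
    intro u
    rw [hΦg u]
    rw [setIntegral_pos_iff_support_of_nonneg_ae
      (Filter.Eventually.of_forall fun t => (hgpos t).le) hgint.integrableOn]
    have : Function.support g ∩ Iic u = Iic u := by
      apply inter_eq_right.mpr
      intro t _; exact (hgpos t).ne'
    rw [this, Real.volume_Iic]; simp
  have hΦderiv : ∀ u, HasDerivAt Φ (g u) u := by
    intro u
    have heq : Φ = fun v => (∫ t in Iic (0:ℝ), g t) + ∫ t in (0:ℝ)..v, g t := by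
      funext v
      rw [hΦg v, ← intervalIntegral.integral_Iic_sub_Iic hgint.integrableOn hgint.integrableOn]
      ring
    rw [heq]
    exact ((intervalIntegral.integral_hasDerivAt_right
      hgint.intervalIntegrable
      (hgcont.stronglyMeasurable.stronglyMeasurableAtFilter)
      hgcont.continuousAt)).const_add _
  have hΦcont : Continuous Φ := by
    apply continuous_iff_continuousAt.mpr
    exact fun u => (hΦderiv u).continuousAt
  have hfhalf : f (1/2) = 1/2 := by
    rw [hf]
    simp only
    rw [show K * (C - (1 - α) * (1/2)) = 0 by rw [hC]; ring, hΦhalf]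
    norm_num
  refine ⟨hfhalf, fun hgt => ?_⟩
  -- setup
  have hα1 : 0 < 1 - α := by linarith [hα.2]
  have hD : 0 < α * γ ^ 2 + (1 - α) * σ ^ 2 := by
    have h1 : 0 ≤ α * γ ^ 2 := mul_nonneg hα.1 (sq_nonneg γ)
    have h2 : 0 < (1 - α) * σ ^ 2 := mul_pos hα1 (by positivity)
    linarith
  -- f is continuous
  have hfcont : Continuous f := by
    rw [hf]
    exact continuous_const.sub (hΦcont.comp (by continuity))
  set F : ℝ → ℝ := fun x => f x - x with hF
  clear_value F
  have hFcont : Continuous F := by rw [hF]; exact hfcont.sub continuous_id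
  have hFhalf : F (1/2) = 0 := by
    rw [hF]; simp only; rw [hfhalf]; ring
  -- derivative of F at 1/2
  set d : ℝ := g 0 * (K * (1 - α)) with hd
  clear_value d
  have hF' : HasDerivAt F (d - 1) (1/2) := by
    have hinner : HasDerivAt (fun x : ℝ => K * (C - (1 - α) * x)) (K * -(1 - α)) (1/2) := by
      have := (((hasDerivAt_id (1/2 : ℝ)).const_mul (1 - α)).const_sub C).const_mul K
      refine this.congr_deriv ?_
      ring
    have hcomp := (hΦderiv (K * (C - (1 - α) * (1/2)))).comp (1/2 : ℝ) hinner
    have hinner0 : K * (C - (1 - α) * (1/2)) = 0 := by rw [hC]; ring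
    rw [hinner0] at hcomp
    have hfder : HasDerivAt f d (1/2) := by
      rw [hf]
      have := hcomp.const_sub 1
      refine this.congr_deriv ?_
      rw [hd]; ring
    rw [hF]
    exact hfder.sub (hasDerivAt_id _)
  have hd1 : 1 < d := by
    have hg0 : g 0 = (Real.sqrt (2 * π))⁻¹ := by simp [hg]
    have hde : d = ((1-α) * Real.sqrt (γ^2+σ^2)) / (Real.sqrt (2*π) * (α*γ^2+(1-α)*σ^2)) := by
      rw [hd, hg0, hK]
      field_simp
    rw [hde, one_lt_div (mul_pos hsqrt_pos hD)]
    exact hgt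
  -- slope argument: F negative just left of 1/2, positive just right
  have hslope := hasDerivAt_iff_tendsto_slope.mp hF'
  have hpos : (0:ℝ) < d - 1 := sub_pos.mpr hd1
  have hev : ∀ᶠ y in nhdsWithin (1/2 : ℝ) {(1/2:ℝ)}ᶜ, 0 < slope F (1/2) y :=
    hslope.eventually (eventually_gt_nhds hpos)
  -- left point
  obtain ⟨x₀, hx₀s, hx₀mem⟩ :
      ∃ x₀, 0 < slope F (1/2) x₀ ∧ x₀ ∈ Ioo (0:ℝ) (1/2) := by
    have h1 : ∀ᶠ y in nhdsWithin (1/2 : ℝ) (Iio (1/2)), 0 < slope F (1/2) y :=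
      hev.filter_mono (nhdsWithin_mono _ (fun y hy => ne_of_lt hy))
    have h2 : Ioo (0:ℝ) (1/2) ∈ nhdsWithin (1/2 : ℝ) (Iio (1/2)) :=
      Ioo_mem_nhdsLT_of_mem ⟨by norm_num, by norm_num⟩
    exact (h1.and (Filter.eventually_of_mem h2 fun y hy => hy)).exists
  have hFx₀ : F x₀ < 0 := by
    have hlt : x₀ - 1/2 < 0 := by linarith [hx₀mem.2]
    have : slope F (1/2) x₀ = F x₀ / (x₀ - 1/2) := by
      rw [slope_def_field, hFhalf]; ring
    rw [this] at hx₀s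
    rcases div_pos_iff.mp hx₀s with ⟨_, h⟩ | ⟨h, _⟩
    · linarith
    · linarith
  -- right point
  obtain ⟨x₁, hx₁s, hx₁mem⟩ :
      ∃ x₁, 0 < slope F (1/2) x₁ ∧ x₁ ∈ Ioo (1/2 : ℝ) 1 := by
    have h1 : ∀ᶠ y in nhdsWithin (1/2 : ℝ) (Ioi (1/2)), 0 < slope F (1/2) y :=
      hev.filter_mono (nhdsWithin_mono _ (fun y hy => ne_of_gt hy))
    have h2 : Ioo (1/2:ℝ) 1 ∈ nhdsWithin (1/2 : ℝ) (Ioi (1/2)) :=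
      Ioo_mem_nhdsGT_of_mem ⟨by norm_num, by norm_num⟩
    exact (h1.and (Filter.eventually_of_mem h2 fun y hy => hy)).exists
  have hFx₁ : 0 < F x₁ := by
    have hlt : 0 < x₁ - 1/2 := by linarith [hx₁mem.1]
    have : slope F (1/2) x₁ = F x₁ / (x₁ - 1/2) := by
      rw [slope_def_field, hFhalf]; ring
    rw [this] at hx₁s
    rcases div_pos_iff.mp hx₁s with ⟨h, _⟩ | ⟨_, h⟩
    · linarith
    · linarith
  -- endpoints
  have hF0 : 0 < F 0 := by
    have h := hΦlt (K * (C - (1 - α) * 0))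
    rw [hF, hf]; simp only
    linarith
  have hF1 : F 1 < 0 := by
    have h := hΦpos (K * (C - (1 - α) * 1))
    rw [hF, hf]; simp only
    linarith
  -- IVT on [0, x₀]
  obtain ⟨a, haI, hFa⟩ : ∃ a ∈ Icc (0:ℝ) x₀, F a = 0 := by
    have hsub := intermediate_value_Icc' (le_of_lt hx₀mem.1) hFcont.continuousOn
    have h0 : (0:ℝ) ∈ Icc (F x₀) (F 0) := ⟨hFx₀.le, hF0.le⟩
    obtain ⟨a, ha, hFa⟩ := hsub h0
    exact ⟨a, ha, hFa⟩
  -- IVT on [x₁, 1]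
  obtain ⟨b, hbI, hFb⟩ : ∃ b ∈ Icc x₁ (1:ℝ), F b = 0 := by
    have hsub := intermediate_value_Icc' (le_of_lt hx₁mem.2) hFcont.continuousOn
    have h0 : (0:ℝ) ∈ Icc (F 1) (F x₁) := ⟨hF1.le, hFx₁.le⟩
    obtain ⟨b, hb, hFb⟩ := hsub h0
    exact ⟨b, hb, hFb⟩
  refine ⟨a, b, ?_, ?_, ?_, ?_⟩
  · have : F a = 0 := hFa; simpa [hF, sub_eq_zero] using this
  · have : F b = 0 := hFb; simpa [hF, sub_eq_zero] using this
  · exact lt_of_le_of_lt haI.2 hx₀mem.2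
  · exact lt_of_lt_of_le hx₁mem.1 hbI.1
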